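/- Let $g_n:[0,1]\to[0,1]$, $n\in\mathbb{N}$, satisfy $g_1(x)=2x$ for $x\in[0,1/2)$, $g_1(x)=2-2x$ for $x\in[1/2,1]$, and $g_{n+1}=g_1\circ g_n$. Let $f_n:[0,1]\to[0,1]$, $n\in\mathbb{N}_0$, be the piecewise linear interpolants of $x\mapsto x^2$ at the grid points $k/2^n$, i.e. $f_n(1)=1$ and for $k\in\{0,\dots,2^n-1\}$ and $x\in[k/2^n,(k+1)/2^n)$, $f_n(x)=\frac{2k+1}{2^n}x-\frac{k^2+k}{2^{2n}}$. Then for all $n\in\mathbb{N}_0$ and $x\in[0,1]$ it holds that $f_n(x)=x-\sum_{m=1}^n 2^{-2m}g_m(x)$ and $|x^2-f_n(x)|\le 2^{-2n-2}$. -/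

import Mathlib

lemma exists_k (n : ℕ) (x : ℝ) (h0 : 0 ≤ x) (h1 : x < 1) :
    ∃ k : ℕ, k < 2^n ∧ (k:ℝ)/2^n ≤ x ∧ x < ((k:ℝ)+1)/2^n := by
  have hp : (0:ℝ) < 2^n := by positivity
  refine ⟨⌊(2:ℝ)^n * x⌋₊, ?_, ?_, ?_⟩
  · rw [← Nat.cast_lt (α := ℝ)]
    calc ((⌊(2:ℝ)^n * x⌋₊ : ℝ)) ≤ 2^n * x := Nat.floor_le (by positivity)
      _ < 2^n := by nlinarith
      _ = ((2^n : ℕ) : ℝ) := by push_cast; ring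
  · rw [div_le_iff₀ hp]
    have := Nat.floor_le (show (0:ℝ) ≤ 2^n * x by positivity)
    linarith
  · rw [lt_div_iff₀ hp]
    have := Nat.lt_floor_add_one ((2:ℝ)^n * x)
    linarith

lemma gform (g : ℕ → ℝ → ℝ)
    (hg1 : ∀ x ∈ Set.Icc (0:ℝ) 1, g 1 x = if x < 1/2 then 2*x else 2 - 2*x)
    (hgrec : ∀ n : ℕ, 1 ≤ n → ∀ x ∈ Set.Icc (0:ℝ) 1, g (n+1) x = g 1 (g n x))
    (hgmem : ∀ n : ℕ, 1 ≤ n → ∀ x ∈ Set.Icc (0:ℝ) 1, g n x ∈ Set.Icc (0:ℝ) 1) :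
    ∀ n : ℕ, 1 ≤ n → ∀ k : ℕ, k < 2^n → ∀ x : ℝ,
      (k:ℝ)/2^n ≤ x → x < ((k:ℝ)+1)/2^n →
      g n x = if Even k then 2^n * x - k else (k+1) - 2^n * x := by
  intro n
  induction n with
  | zero => omega
  | succ n ih =>
    intro _ k hk x hxl hxu
    have hp : (0:ℝ) < 2^n := by positivity
    have hkx : (k:ℝ) ≤ 2 * 2^n * x := by
      rw [div_le_iff₀ (by positivity)] at hxl
      rw [pow_succ] at hxl; linarith
    have hkx2 : 2 * 2^n * x < (k:ℝ) + 1 := by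
      rw [lt_div_iff₀ (by positivity)] at hxu
      rw [pow_succ] at hxu; linarith
    have hx01 : x ∈ Set.Icc (0:ℝ) 1 := by
      constructor
      · nlinarith [Nat.cast_nonneg (α := ℝ) k]
      · have : (k:ℝ) + 1 ≤ 2 * 2^n := by
          have : (k:ℝ) + 1 ≤ ((2^(n+1):ℕ):ℝ) := by exact_mod_cast hk
          push_cast [pow_succ] at this; linarith
        nlinarith
    rcases Nat.eq_zero_or_pos n with hn0 | hn1
    · -- n = 0 : base case, this is g 1
      subst hn0
      have hk1 : k = 0 ∨ k = 1 := by omega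
      rw [hg1 x hx01]
      norm_num at hkx hkx2
      rcases hk1 with rfl | rfl
      · push_cast at hkx2
        rw [if_pos (by linarith), if_pos (Even.zero)]
        push_cast; ring
      · push_cast at hkx
        rw [if_neg (by push_neg; linarith), if_neg (by rw [Nat.even_iff]; omega)]
        push_cast; ring
    · -- inductive step
      have hn1' : 1 ≤ n := hn1
      set j := k / 2 with hjdef
      have hj : k = 2*j ∨ k = 2*j + 1 := by omega
      have hjlt : j < 2^n := by rw [pow_succ] at hk; omega
      have hjl : (j:ℝ)/2^n ≤ x := by
        rw [div_le_iff₀ hp]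
        rcases hj with hj | hj <;> (rw [hj] at hkx hkx2; push_cast at hkx hkx2) <;> linarith
      have hju : x < ((j:ℝ)+1)/2^n := by
        rw [lt_div_iff₀ hp]
        rcases hj with hj | hj <;> (rw [hj] at hkx hkx2; push_cast at hkx hkx2) <;> linarith
      have hy := ih hn1' j hjlt x hjl hju
      have hymem := hgmem n hn1' x hx01
      rw [hy] at hymem
      rw [hgrec n hn1' x hx01, hy, hg1 _ hymem]
      rcases Nat.even_or_odd j with hje | hjo
      · rw [if_pos hje] at hymem ⊢
        rcases hj with hj | hj
        · -- k = 2j even, j even: y = 2^n x - j < 1/2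
          rw [hj] at hkx2 ⊢
          push_cast at hkx2 ⊢
          rw [if_pos (by linarith), if_pos (by rw [Nat.even_iff]; omega)]
          rw [pow_succ]; push_cast; ring
        · -- k = 2j+1 odd, j even: y ≥ 1/2
          rw [hj] at hkx ⊢
          push_cast at hkx ⊢
          rw [if_neg (by push_neg; linarith), if_neg (by rw [Nat.even_iff]; omega)]
          rw [pow_succ]; push_cast; ring
      · rw [if_neg (Nat.not_even_iff_odd.mpr hjo)] at hymem ⊢
        rcases hj with hj | hj
        · -- k = 2j even, j odd: y = j+1 - 2^n x > 1/2
          rw [hj] at hkx2 ⊢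
          push_cast at hkx2 ⊢
          rw [if_neg (by push_neg; linarith), if_pos (by rw [Nat.even_iff]; omega)]
          rw [pow_succ]; push_cast; ring
        · -- k = 2j+1 odd, j odd: y = j+1 - 2^n x ≤ 1/2
          rw [hj] at hkx ⊢
          push_cast at hkx ⊢
          by_cases hc : ((j:ℝ)+1) - 2^n * x < 1/2
          · rw [if_pos hc, if_neg (by rw [Nat.even_iff]; omega), pow_succ]; push_cast; ring
          · rw [if_neg hc, if_neg (by rw [Nat.even_iff]; omega)]
            push_neg at hc
            have : 2 * 2^n * x = 2*(j:ℝ) + 1 := by linarith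
            rw [pow_succ]; push_cast; linarith

theorem stmt1
    (g : ℕ → ℝ → ℝ)
    (hg1 : ∀ x ∈ Set.Icc (0:ℝ) 1, g 1 x = if x < 1/2 then 2*x else 2 - 2*x)
    (hgrec : ∀ n : ℕ, 1 ≤ n → ∀ x ∈ Set.Icc (0:ℝ) 1, g (n+1) x = g 1 (g n x))
    (hgmem : ∀ n : ℕ, 1 ≤ n → ∀ x ∈ Set.Icc (0:ℝ) 1, g n x ∈ Set.Icc (0:ℝ) 1)
    (f : ℕ → ℝ → ℝ)
    (hf1 : ∀ n : ℕ, f n 1 = 1)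
    (hf : ∀ n : ℕ, ∀ k : ℕ, k < 2^n → ∀ x : ℝ,
      (k : ℝ)/2^n ≤ x → x < ((k:ℝ)+1)/2^n →
        f n x = ((2*(k:ℝ)+1)/2^n) * x - ((k:ℝ)^2 + k)/2^(2*n)) :
    ∀ n : ℕ, ∀ x ∈ Set.Icc (0:ℝ) 1,
      f n x = x - ∑ m ∈ Finset.Icc 1 n, ((2:ℝ)^(2*m))⁻¹ * g m x
      ∧ |x^2 - f n x| ≤ ((2:ℝ)^(2*n+2))⁻¹ := by
  -- g m 1 = 0 for m ≥ 1
  have hone : (1:ℝ) ∈ Set.Icc (0:ℝ) 1 := by norm_num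
  have hg1zero : ∀ m : ℕ, 1 ≤ m → g m 1 = 0 := by
    intro m
    induction m with
    | zero => omega
    | succ m ih =>
      intro _
      rcases Nat.eq_zero_or_pos m with rfl | hm
      · rw [hg1 1 hone]; norm_num
      · rw [hgrec m hm 1 hone, ih hm, hg1 0 (by norm_num)]; norm_num
  have hG := gform g hg1 hgrec hgmem
  -- error bound
  have herr : ∀ n : ℕ, ∀ x ∈ Set.Icc (0:ℝ) 1, |x^2 - f n x| ≤ ((2:ℝ)^(2*n+2))⁻¹ := by
    intro n x hx
    have hb : (0:ℝ) < (2:ℝ)^(2*n+2) := by positivity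
    rcases eq_or_lt_of_le hx.2 with h1 | h1
    · rw [h1] at *; rw [hf1 n]; norm_num
    · obtain ⟨k, hk, hxl, hxu⟩ := exists_k n x hx.1 h1
      rw [hf n k hk x hxl hxu]
      have hp : (0:ℝ) < 2^n := by positivity
      rw [div_le_iff₀ hp] at hxl
      rw [lt_div_iff₀ hp] at hxu
      have e2 : (2:ℝ)^(2*n) = 2^n * 2^n := by rw [two_mul, pow_add]
      have key : x^2 - (((2*(k:ℝ)+1)/2^n) * x - ((k:ℝ)^2 + k)/2^(2*n))
          = -((x - (k:ℝ)/2^n) * (((k:ℝ)+1)/2^n - x)) := by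
        rw [e2]; field_simp; ring
      rw [key, abs_neg, abs_of_nonneg (by
        apply mul_nonneg
        · rw [sub_nonneg, div_le_iff₀ hp]; linarith
        · rw [sub_nonneg, le_div_iff₀ hp]; linarith)]
      have h2 : ((2:ℝ)^(2*n+2))⁻¹ = (((2:ℝ)^n)⁻¹)^2/4 := by
        rw [pow_add, e2]; field_simp; ring
      rw [h2]
      set a := x - (k:ℝ)/2^n with ha
      set c := ((k:ℝ)+1)/2^n - x with hc
      have hac : a + c = ((2:ℝ)^n)⁻¹ := by rw [ha, hc]; field_simp; ring
      have hsq : (a+c)^2 = (((2:ℝ)^n)⁻¹)^2 := by rw [hac]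
      clear_value a c
      nlinarith [sq_nonneg (a - c), hsq]
  -- main identity
  have hmain : ∀ n : ℕ, ∀ x ∈ Set.Icc (0:ℝ) 1,
      f n x = x - ∑ m ∈ Finset.Icc 1 n, ((2:ℝ)^(2*m))⁻¹ * g m x := by
    intro n
    induction n with
    | zero =>
      intro x hx
      simp only [Finset.Icc_self, Finset.Icc_eq_empty_of_lt (by norm_num : (1:ℕ) > 0)]
      rcases eq_or_lt_of_le hx.2 with h1 | h1
      · rw [h1]; rw [hf1 0]; simp
      · have := hf 0 0 (by norm_num) x (by simpa using hx.1) (by simpa using h1)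
        simp at this
        rw [this]
        simp
    | succ n ih =>
      intro x hx
      have hsum : ∑ m ∈ Finset.Icc 1 (n+1), ((2:ℝ)^(2*m))⁻¹ * g m x
          = (∑ m ∈ Finset.Icc 1 n, ((2:ℝ)^(2*m))⁻¹ * g m x) + ((2:ℝ)^(2*(n+1)))⁻¹ * g (n+1) x := by
        rw [← Finset.sum_Icc_succ_top (by omega : 1 ≤ n+1)]
      have hstep : f (n+1) x = f n x - ((2:ℝ)^(2*(n+1)))⁻¹ * g (n+1) x := by
        rcases eq_or_lt_of_le hx.2 with h1 | h1
        · rw [h1, hf1, hf1, hg1zero (n+1) (by omega)]; ring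
        · obtain ⟨k, hk, hxl, hxu⟩ := exists_k (n+1) x hx.1 h1
          have hp : (0:ℝ) < 2^n := by positivity
          have hkx : (k:ℝ) ≤ 2 * 2^n * x := by
            rw [div_le_iff₀ (by positivity)] at hxl
            rw [pow_succ] at hxl; linarith
          have hkx2 : 2 * 2^n * x < (k:ℝ) + 1 := by
            rw [lt_div_iff₀ (by positivity)] at hxu
            rw [pow_succ] at hxu; linarith
          have hgv := hG (n+1) (by omega) k hk x hxl hxu
          have hfv := hf (n+1) k hk x hxl hxu
          set j := k / 2 with hjdef
          have hj : k = 2*j ∨ k = 2*j + 1 := by omega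
          have hjlt : j < 2^n := by rw [pow_succ] at hk; omega
          have hjl : (j:ℝ)/2^n ≤ x := by
            rw [div_le_iff₀ hp]
            rcases hj with hj | hj <;> (rw [hj] at hkx hkx2; push_cast at hkx hkx2) <;> linarith
          have hju : x < ((j:ℝ)+1)/2^n := by
            rw [lt_div_iff₀ hp]
            rcases hj with hj | hj <;> (rw [hj] at hkx hkx2; push_cast at hkx hkx2) <;> linarith
          have hfn := hf n j hjlt x hjl hju
          rw [hfv, hfn, hgv]
          rcases hj with hj | hj
          · rw [if_pos (by rw [hj]; exact ⟨j, by omega⟩)]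
            rw [hj]
            have e2 : (2:ℝ)^(2*n) = 2^n * 2^n := by rw [two_mul, pow_add]
            have e1 : (2:ℝ)^(2*(n+1)) = 4 * (2^n * 2^n) := by
              rw [show 2*(n+1) = 2*n+2 by ring, pow_add, e2]; ring
            rw [e1, e2, pow_succ]
            push_cast
            field_simp
            ring
          · rw [if_neg (by rw [hj, Nat.even_iff]; omega)]
            rw [hj]
            have e2 : (2:ℝ)^(2*n) = 2^n * 2^n := by rw [two_mul, pow_add]
            have e1 : (2:ℝ)^(2*(n+1)) = 4 * (2^n * 2^n) := by
              rw [show 2*(n+1) = 2*n+2 by ring, pow_add, e2]; ring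
            rw [e1, e2, pow_succ]
            push_cast
            field_simp
            ring
      rw [hstep, ih x hx, hsum]
      ring
  intro n x hx
  exact ⟨hmain n x hx, herr n x hx⟩
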